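/- Fix an integer n ≥ 1 and set A = exp(2πi/n) and B = 1 − A in ℂ. Let (x_t)_{t≥1} be a sequence with x_t ∈ {0, 1}, and define h : ℕ → ℂ by h₀ = 1 and h_t = A·h_{t−1} + B·x_t. For each t let z_t be the number of indices 1 ≤ i ≤ t with x_i = 0 (and z₀ = 0). Suppose that for every t with x_t = 1, n divides z_{t−1} (i.e., a one may only occur after a completed block of zeros of length a multiple of n). Then for all t, h_t = A^{z_t}, and consequently h_t = 1 if and only if n divides z_t. -/
import Mathlib


/-- Analytic solution of the offset prediction task by a scalar complex linear
recurrence: with `A = exp(2πi/n)`, `B = 1 − A`, binary inputs `x_t` such that a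
one may only occur after a completed block of zeros of length a multiple of `n`,
the state satisfies `h_t = A^{z_t}` where `z_t` counts the zeros among
`x_1, …, x_t`; in particular `h_t = 1` iff `n ∣ z_t`. -/
theorem offset_prediction_solution
    (n : ℕ) (hn : 1 ≤ n)
    (A B : ℂ)
    (hA : A = Complex.exp (2 * Real.pi * Complex.I / n))
    (hB : B = 1 - A)
    (x : ℕ → ℕ) (hx : ∀ t, x t = 0 ∨ x t = 1)
    (h : ℕ → ℂ) (h0 : h 0 = 1)
    (hrec : ∀ t : ℕ, h (t + 1) = A * h t + B * (x (t + 1) : ℂ))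
    (z : ℕ → ℕ)
    (hz : ∀ t : ℕ, z t = ((Finset.Icc 1 t).filter (fun i => x i = 0)).card)
    (hones : ∀ t : ℕ, 1 ≤ t → x t = 1 → n ∣ z (t - 1)) :
    ∀ t : ℕ, h t = A ^ (z t) ∧ (h t = 1 ↔ n ∣ z t) := by
  have hprim : IsPrimitiveRoot A n := by
    rw [hA]; exact Complex.isPrimitiveRoot_exp n (by omega)
  have hpow : ∀ k : ℕ, A ^ k = 1 ↔ n ∣ k := fun k => hprim.pow_eq_one_iff_dvd k
  have key : ∀ t : ℕ, h t = A ^ (z t) := by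
    intro t
    induction t with
    | zero =>
      simp [h0, hz 0]
    | succ t ih =>
      have hzrec : z (t + 1) = z t + (if x (t + 1) = 0 then 1 else 0) := by
        rw [hz (t + 1), hz t]
        rw [show Finset.Icc 1 (t + 1) = insert (t + 1) (Finset.Icc 1 t) by
          ext i; simp only [Finset.mem_Icc, Finset.mem_insert]; omega]
        rw [Finset.filter_insert]
        split <;> simp [Finset.card_insert_of_notMem, Finset.mem_filter]
      rcases hx (t + 1) with h01 | h01
      · rw [hrec t, ih, h01, hzrec, h01]
        simp [pow_succ]; ring
      · have hdvd : n ∣ z t := by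
          have := hones (t + 1) (by omega) h01
          simpa using this
        rw [hrec t, ih, h01, hzrec, h01, (hpow (z t)).2 hdvd, hB]
        simp [(hpow (z t)).2 hdvd]
  intro t
  exact ⟨key t, by rw [key t]; exact hpow (z t)⟩
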